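/- Let (Ω, 𝔉, P) be a probability space with filtration (𝔉_T)_{T∈ℕ}, k ≥ 1, m ∈ {1,…,k}, and real parameters θ_1,…,θ_k. For each i ∈ {1,…,k} and α ∈ (0,1), let (L_{iT}(α))_{T∈ℕ} and (U_{iT}(α))_{T∈ℕ} be (𝔉_T)-adapted real processes satisfying the anytime-valid coverage property P(∃T ∈ ℕ : θ_i ≤ L_{iT}(α)) ≤ α and P(∃T ∈ ℕ : θ_i ≥ U_{iT}(α)) ≤ α. Let τ be any stopping time with respect to (𝔉_T) and let Ŝ_τ be any 𝔉_τ-measurable random subset of {1,…,k} with |Ŝ_τ| ≥ m almost surely. Set α^B = mα/(2k). Then the stopped false coverage rate sFCR(α^B) = E[ Σ_{i∈Ŝ_τ} 𝟙{θ_i ∉ (L_{iτ}(α^B), U_{iτ}(α^B))} / |Ŝ_τ| ] satisfies sFCR(α^B) ≤ α. -/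

import Mathlib

open MeasureTheory

/-- Theorem 3: sFCR control of Bonferroni post-screening inference at level `α^B = mα/(2k)`,
assuming only the anytime-valid coverage property of the confidence bounds. -/
theorem bonferroni_psi_sfcr_control
    {Ω : Type*} {m0 : MeasurableSpace Ω} (P : Measure Ω) [IsProbabilityMeasure P]
    (ℱ : Filtration ℕ m0)
    (k m : ℕ) (hk : 1 ≤ k) (hm1 : 1 ≤ m) (hmk : m ≤ k)
    (θ : Fin k → ℝ)
    (L U : Fin k → ℝ → ℕ → Ω → ℝ)
    (hLadapted : ∀ i (a : ℝ), a ∈ Set.Ioo (0 : ℝ) 1 → Adapted ℱ (L i a))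
    (hUadapted : ∀ i (a : ℝ), a ∈ Set.Ioo (0 : ℝ) 1 → Adapted ℱ (U i a))
    (hLcov : ∀ i (a : ℝ), a ∈ Set.Ioo (0 : ℝ) 1 →
      P {ω | ∃ T : ℕ, 1 ≤ T ∧ θ i ≤ L i a T ω} ≤ ENNReal.ofReal a)
    (hUcov : ∀ i (a : ℝ), a ∈ Set.Ioo (0 : ℝ) 1 →
      P {ω | ∃ T : ℕ, 1 ≤ T ∧ U i a T ω ≤ θ i} ≤ ENNReal.ofReal a)
    (α : ℝ) (hα : α ∈ Set.Ioo (0 : ℝ) 1)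
    (τ : Ω → ℕ) (hτ : IsStoppingTime ℱ (fun ω => (τ ω : WithTop ℕ))) (hτ1 : ∀ ω, 1 ≤ τ ω)
    (S : Ω → Finset (Fin k))
    (hScard : ∀ᵐ ω ∂P, m ≤ (S ω).card)
    (hSmeas : ∀ s : Finset (Fin k), MeasurableSet[hτ.measurableSpace] {ω | S ω = s}) :
    -- sFCR(α^B) ≤ α, where α^B = mα/(2k)
    (∫⁻ ω, ENNReal.ofReal
        ((∑ i ∈ S ω,
          (if θ i ≤ L i (m * α / (2 * k)) (τ ω) ω ∨
              U i (m * α / (2 * k)) (τ ω) ω ≤ θ i then (1 : ℝ) else 0)) /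
          (S ω).card) ∂P) ≤ ENNReal.ofReal α := by
  set a : ℝ := m * α / (2 * k) with ha_def
  have hk0 : (0 : ℝ) < k := by exact_mod_cast hk
  have hm0 : (0 : ℝ) < m := by exact_mod_cast hm1
  have ha_pos : 0 < a := div_pos (mul_pos hm0 hα.1) (by linarith)
  have ha_lt1 : a < 1 := by
    have hmk' : (m : ℝ) ≤ k := by exact_mod_cast hmk
    have : a ≤ α / 2 := by
      rw [ha_def, div_le_div_iff₀ (by linarith) (by norm_num)]
      nlinarith [hα.1.le, hα.2]
    linarith [hα.2]
  have ha : a ∈ Set.Ioo (0 : ℝ) 1 := ⟨ha_pos, ha_lt1⟩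
  -- the miscoverage sets
  set A : Fin k → Set Ω := fun i =>
    {ω | θ i ≤ L i a (τ ω) ω ∨ U i a (τ ω) ω ≤ θ i} with hA_def
  -- pointwise bound
  have hpt : ∀ᵐ ω ∂P,
      ENNReal.ofReal
        ((∑ i ∈ S ω, (if θ i ≤ L i a (τ ω) ω ∨ U i a (τ ω) ω ≤ θ i then (1 : ℝ) else 0)) /
          (S ω).card)
      ≤ ∑ i : Fin k, (A i).indicator (fun _ => ENNReal.ofReal (1 / m)) ω := by
    filter_upwards [hScard] with ω hcard
    have hcard' : (m : ℝ) ≤ (S ω).card := by exact_mod_cast hcard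
    set N : ℝ := ∑ i ∈ S ω, (if θ i ≤ L i a (τ ω) ω ∨ U i a (τ ω) ω ≤ θ i then (1 : ℝ) else 0)
    set N' : ℝ := ∑ i : Fin k, (if θ i ≤ L i a (τ ω) ω ∨ U i a (τ ω) ω ≤ θ i then (1 : ℝ) else 0)
    have hN_nonneg : 0 ≤ N := Finset.sum_nonneg fun i _ => by positivity
    have hNN' : N ≤ N' := Finset.sum_le_sum_of_subset_of_nonneg (Finset.subset_univ _)
      (fun i _ _ => by positivity)
    have h1 : N / (S ω).card ≤ N' / m :=
      div_le_div₀ (hN_nonneg.trans hNN') hNN' hm0 hcard'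
    calc ENNReal.ofReal (N / (S ω).card) ≤ ENNReal.ofReal (N' / m) :=
          ENNReal.ofReal_le_ofReal h1
      _ = ∑ i : Fin k, ENNReal.ofReal
            ((if θ i ≤ L i a (τ ω) ω ∨ U i a (τ ω) ω ≤ θ i then (1 : ℝ) else 0) / m) := by
          rw [Finset.sum_div]
          exact ENNReal.ofReal_sum_of_nonneg fun i _ => by positivity
      _ = ∑ i : Fin k, (A i).indicator (fun _ => ENNReal.ofReal (1 / m)) ω := by
          refine Finset.sum_congr rfl fun i _ => ?_
          by_cases h : θ i ≤ L i a (τ ω) ω ∨ U i a (τ ω) ω ≤ θ i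
          · rw [if_pos h, Set.indicator_of_mem (show ω ∈ A i from h)]
          · rw [if_neg h, Set.indicator_of_notMem (show ω ∉ A i from h), zero_div,
              ENNReal.ofReal_zero]
  -- measurability of A i
  have hAmeas : ∀ i, MeasurableSet (A i) := by
    intro i
    have hgL : Measurable fun ω => L i a (τ ω) ω :=
      (measurable_stoppedValue (hLadapted i a ha).stronglyAdapted.isStronglyProgressive_of_discrete hτ).mono
        hτ.measurableSpace_le le_rfl
    have hgU : Measurable fun ω => U i a (τ ω) ω :=
      (measurable_stoppedValue (hUadapted i a ha).stronglyAdapted.isStronglyProgressive_of_discrete hτ).mono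
        hτ.measurableSpace_le le_rfl
    have : A i = {ω | θ i ≤ L i a (τ ω) ω} ∪ {ω | U i a (τ ω) ω ≤ θ i} := rfl
    rw [this]
    exact (measurableSet_le measurable_const hgL).union (measurableSet_le hgU measurable_const)
  -- bound on each P (A i)
  have hPA : ∀ i, P (A i) ≤ 2 * ENNReal.ofReal a := by
    intro i
    have hsub : A i ⊆ {ω | ∃ T : ℕ, 1 ≤ T ∧ θ i ≤ L i a T ω} ∪
        {ω | ∃ T : ℕ, 1 ≤ T ∧ U i a T ω ≤ θ i} := by
      intro ω hω
      rcases hω with h | h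
      · exact Or.inl ⟨τ ω, hτ1 ω, h⟩
      · exact Or.inr ⟨τ ω, hτ1 ω, h⟩
    calc P (A i) ≤ P ({ω | ∃ T : ℕ, 1 ≤ T ∧ θ i ≤ L i a T ω} ∪
          {ω | ∃ T : ℕ, 1 ≤ T ∧ U i a T ω ≤ θ i}) := measure_mono hsub
      _ ≤ P {ω | ∃ T : ℕ, 1 ≤ T ∧ θ i ≤ L i a T ω} +
          P {ω | ∃ T : ℕ, 1 ≤ T ∧ U i a T ω ≤ θ i} := measure_union_le _ _
      _ ≤ ENNReal.ofReal a + ENNReal.ofReal a := add_le_add (hLcov i a ha) (hUcov i a ha)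
      _ = 2 * ENNReal.ofReal a := (two_mul _).symm
  calc (∫⁻ ω, ENNReal.ofReal
        ((∑ i ∈ S ω, (if θ i ≤ L i a (τ ω) ω ∨ U i a (τ ω) ω ≤ θ i then (1 : ℝ) else 0)) /
          (S ω).card) ∂P)
      ≤ ∫⁻ ω, ∑ i : Fin k, (A i).indicator (fun _ => ENNReal.ofReal (1 / m)) ω ∂P :=
        lintegral_mono_ae hpt
    _ = ∑ i : Fin k, ∫⁻ ω, (A i).indicator (fun _ => ENNReal.ofReal (1 / m)) ω ∂P :=
        lintegral_finset_sum _ fun i _ => measurable_const.indicator (hAmeas i)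
    _ ≤ ∑ i : Fin k, ENNReal.ofReal (1 / m) * P (A i) :=
        Finset.sum_le_sum fun i _ => lintegral_indicator_const_le _ _
    _ ≤ ∑ i : Fin k, ENNReal.ofReal (1 / m) * (2 * ENNReal.ofReal a) :=
        Finset.sum_le_sum fun i _ => mul_le_mul_right (hPA i) _
    _ = k * (ENNReal.ofReal (1 / m) * (2 * ENNReal.ofReal a)) := by
        rw [Finset.sum_const, Finset.card_univ, Fintype.card_fin, nsmul_eq_mul]
    _ = ENNReal.ofReal α := by
        rw [← ENNReal.ofReal_ofNat 2, ← ENNReal.ofReal_mul (by positivity),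
          ← ENNReal.ofReal_mul (by positivity), ← ENNReal.ofReal_natCast k,
          ← ENNReal.ofReal_mul (by positivity)]
        congr 1
        field_simp [ha_def]
        rw [ha_def]
        field_simp
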